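/- Let c = (C_bro, C_A, C_liv, C_tis) be any differentiable solution of the four-compartment acetone model. Then the total mass m(t) := Ṽ_bro·C_bro(t) + Ṽ_A·C_A(t) + Ṽ_liv·C_liv(t) + Ṽ_tis·C_tis(t) satisfies m'(t) = k_pr − k_met·λ_b:liv·C_liv(t) + V̇_A·(C_I − C_bro(t)) for all t; equivalently, writing the model as ċ = A c + b, the row vector (Ṽ_bro, Ṽ_A, Ṽ_liv, Ṽ_tis) satisfies (Ṽ_bro, Ṽ_A, Ṽ_liv, Ṽ_tis)·A = (−V̇_A, 0, −k_met·λ_b:liv, 0). -/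

import Mathlib

open Set Matrix

/-- Right-hand side of the four-compartment acetone model (constant inputs): the state is
`c = (C_bro, C_A, C_liv, C_tis)` (indices `0,1,2,3`). -/
noncomputable def acetoneRHS (Vbro VA Vliv Vtis lba lma lmb lbl lbt kpr kmet qbro qliv
    VdA Qc D CI : ℝ) (c : Fin 4 → ℝ) : Fin 4 → ℝ :=
  ![(VdA * (CI - c 0) + D * (c 1 - c 0) +
      qbro * Qc * (((1 - qbro) * lba * c 1 + qbro * (lma / lmb) * c 0) - (lma / lmb) * c 0)) / Vbro,
    (D * (c 0 - c 1) +
      (1 - qbro) * Qc * ((qliv * lbl * c 2 + (1 - qliv) * lbt * c 3) - lba * c 1)) / VA,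
    (kpr - kmet * lbl * c 2 +
      qliv * (1 - qbro) * Qc * (((1 - qbro) * lba * c 1 + qbro * (lma / lmb) * c 0)
        - lbl * c 2)) / Vliv,
    ((1 - qliv) * (1 - qbro) * Qc * (((1 - qbro) * lba * c 1 + qbro * (lma / lmb) * c 0)
        - lbt * c 3)) / Vtis]

/-- For any differentiable solution of the four-compartment acetone model with
constant inputs, the total mass `m = Ṽ_bro·C_bro + Ṽ_A·C_A + Ṽ_liv·C_liv + Ṽ_tis·C_tis`
satisfies `m' = k_pr − k_met·λ_b:liv·C_liv + V̇_A·(C_I − C_bro)`; equivalently, writing the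
model as `ċ = A c + b`, the row vector `(Ṽ_bro, Ṽ_A, Ṽ_liv, Ṽ_tis)` satisfies
`(Ṽ_bro, Ṽ_A, Ṽ_liv, Ṽ_tis)·A = (−V̇_A, 0, −k_met·λ_b:liv, 0)`. -/
theorem acetone_total_mass
    (Vbro VA Vliv Vtis lba lma lmb lbl lbt kpr kmet qbro qliv VdA Qc D CI : ℝ)
    (hVbro : 0 < Vbro) (hVA : 0 < VA) (hVliv : 0 < Vliv) (hVtis : 0 < Vtis)
    (hlba : 0 < lba) (hlma : 0 < lma) (hlmb : 0 < lmb) (hlbl : 0 < lbl) (hlbt : 0 < lbt)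
    (hVdA : 0 ≤ VdA) (hQc : 0 ≤ Qc) (hD : 0 ≤ D) (hkpr : 0 ≤ kpr) (hkmet : 0 ≤ kmet)
    (hqbro0 : 0 ≤ qbro) (hqbro1 : qbro < 1) (hqliv0 : 0 < qliv) (hqliv1 : qliv < 1) :
    (∀ (c : ℝ → Fin 4 → ℝ),
      (∀ t : ℝ, HasDerivAt c
        (acetoneRHS Vbro VA Vliv Vtis lba lma lmb lbl lbt kpr kmet qbro qliv
          VdA Qc D CI (c t)) t) →
      ∀ t : ℝ, HasDerivAt
        (fun s => Vbro * c s 0 + VA * c s 1 + Vliv * c s 2 + Vtis * c s 3)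
        (kpr - kmet * lbl * c t 2 + VdA * (CI - c t 0)) t) ∧
    (∀ (A : Matrix (Fin 4) (Fin 4) ℝ) (b : Fin 4 → ℝ),
      (∀ x : Fin 4 → ℝ, A *ᵥ x + b =
        acetoneRHS Vbro VA Vliv Vtis lba lma lmb lbl lbt kpr kmet qbro qliv VdA Qc D CI x) →
      ![Vbro, VA, Vliv, Vtis] ᵥ* A = ![-VdA, 0, -(kmet * lbl), 0]) := by
  constructor
  · intro c hc t
    have h := hc t
    have hcomp : ∀ i : Fin 4, HasDerivAt (fun s => c s i)
        (acetoneRHS Vbro VA Vliv Vtis lba lma lmb lbl lbt kpr kmet qbro qliv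
          VdA Qc D CI (c t) i) t := by
      intro i
      exact hasDerivAt_pi.mp h i
    have h0 := (hcomp 0).const_mul Vbro
    have h1 := (hcomp 1).const_mul VA
    have h2 := (hcomp 2).const_mul Vliv
    have h3 := (hcomp 3).const_mul Vtis
    have hsum := ((h0.add h1).add h2).add h3
    refine hsum.congr_deriv ?_
    simp only [acetoneRHS]
    simp only [Matrix.cons_val_zero, Matrix.cons_val_one, Matrix.head_cons,
      Matrix.cons_val_two, Matrix.tail_cons, Matrix.cons_val_three]
    field_simp
    ring
  · intro A b hAb
    set F := acetoneRHS Vbro VA Vliv Vtis lba lma lmb lbl lbt kpr kmet qbro qliv VdA Qc D CI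
      with hF
    have hb : b = F 0 := by
      have := hAb 0
      simpa using this
    have hA : ∀ x, A *ᵥ x = F x - F 0 := by
      intro x
      have h := hAb x
      rw [hb] at h
      exact eq_sub_of_add_eq h
    have col0 : ∀ i, A i 0 = F ![1,0,0,0] i - F 0 i := by
      intro i
      have h := congrFun (hA ![1,0,0,0]) i
      simpa [Matrix.mulVec, dotProduct, Fin.sum_univ_four] using h
    have col1 : ∀ i, A i 1 = F ![0,1,0,0] i - F 0 i := by
      intro i
      have h := congrFun (hA ![0,1,0,0]) i
      simpa [Matrix.mulVec, dotProduct, Fin.sum_univ_four] using h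
    have col2 : ∀ i, A i 2 = F ![0,0,1,0] i - F 0 i := by
      intro i
      have h := congrFun (hA ![0,0,1,0]) i
      simpa [Matrix.mulVec, dotProduct, Fin.sum_univ_four] using h
    have col3 : ∀ i, A i 3 = F ![0,0,0,1] i - F 0 i := by
      intro i
      have h := congrFun (hA ![0,0,0,1]) i
      simpa [Matrix.mulVec, dotProduct, Fin.sum_univ_four] using h
    funext j
    fin_cases j
    · show (![Vbro, VA, Vliv, Vtis] ᵥ* A) 0 = -VdA
      simp only [Matrix.vecMul, dotProduct, Fin.sum_univ_four, Matrix.cons_val_zero,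
        Matrix.cons_val_one, Matrix.head_cons, Matrix.cons_val_two, Matrix.tail_cons,
        Matrix.cons_val_three]
      rw [col0 0, col0 1, col0 2, col0 3]
      simp only [hF, acetoneRHS, Matrix.cons_val_zero, Matrix.cons_val_one, Matrix.head_cons,
        Matrix.cons_val_two, Matrix.tail_cons, Matrix.cons_val_three, Pi.zero_apply]
      field_simp
      ring
    · show (![Vbro, VA, Vliv, Vtis] ᵥ* A) 1 = 0
      simp only [Matrix.vecMul, dotProduct, Fin.sum_univ_four, Matrix.cons_val_zero,
        Matrix.cons_val_one, Matrix.head_cons, Matrix.cons_val_two, Matrix.tail_cons,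
        Matrix.cons_val_three]
      rw [col1 0, col1 1, col1 2, col1 3]
      simp only [hF, acetoneRHS, Matrix.cons_val_zero, Matrix.cons_val_one, Matrix.head_cons,
        Matrix.cons_val_two, Matrix.tail_cons, Matrix.cons_val_three, Pi.zero_apply]
      field_simp
      ring
    · show (![Vbro, VA, Vliv, Vtis] ᵥ* A) 2 = -(kmet * lbl)
      simp only [Matrix.vecMul, dotProduct, Fin.sum_univ_four, Matrix.cons_val_zero,
        Matrix.cons_val_one, Matrix.head_cons, Matrix.cons_val_two, Matrix.tail_cons,
        Matrix.cons_val_three]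
      rw [col2 0, col2 1, col2 2, col2 3]
      simp only [hF, acetoneRHS, Matrix.cons_val_zero, Matrix.cons_val_one, Matrix.head_cons,
        Matrix.cons_val_two, Matrix.tail_cons, Matrix.cons_val_three, Pi.zero_apply]
      field_simp
      ring
    · show (![Vbro, VA, Vliv, Vtis] ᵥ* A) 3 = 0
      simp only [Matrix.vecMul, dotProduct, Fin.sum_univ_four, Matrix.cons_val_zero,
        Matrix.cons_val_one, Matrix.head_cons, Matrix.cons_val_two, Matrix.tail_cons,
        Matrix.cons_val_three]
      rw [col3 0, col3 1, col3 2, col3 3]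
      simp only [hF, acetoneRHS, Matrix.cons_val_zero, Matrix.cons_val_one, Matrix.head_cons,
        Matrix.cons_val_two, Matrix.tail_cons, Matrix.cons_val_three, Pi.zero_apply]
      field_simp
      ring
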